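/- Let ρ be a density matrix on ℂ^d and let {P_n}_{n∈F} be a finite family of positive semidefinite d×d matrices satisfying ∑_n P_n² = 1. Then S(ρ) ≤ S(∑_n P_n ρ P_n), i.e., the von Neumann entropy of the ensemble-averaged post-measurement state is at least that of the pre-measurement state. -/

import Mathlib

open Matrix
open scoped BigOperators Classical ComplexOrder

/-- Von Neumann entropy of a matrix: `-∑ λᵢ log λᵢ` over its eigenvalues if it is
Hermitian, and `0` otherwise (junk value). -/
noncomputable def vnEntropy {n : Type*} [Fintype n] [DecidableEq n]
    (A : Matrix n n ℂ) : ℝ :=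
  if hA : A.IsHermitian then ∑ i, Real.negMulLog (hA.eigenvalues i) else 0

/-- The entropy of the ensemble-averaged post-measurement state is at least the
entropy of the pre-measurement state. -/
theorem vnEntropy_le_vnEntropy_sum_measurement
    {d : ℕ} {F : Type*} [Fintype F]
    (ρ : Matrix (Fin d) (Fin d) ℂ) (hρ : ρ.PosSemidef) (hρtr : ρ.trace = 1)
    (P : F → Matrix (Fin d) (Fin d) ℂ) (hP : ∀ n, (P n).PosSemidef)
    (hPsum : ∑ n, (P n) ^ 2 = 1) :
    vnEntropy ρ ≤ vnEntropy (∑ n, P n * ρ * P n) := by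
  classical
  have hPh : ∀ n, (P n).IsHermitian := fun n => (hP n).1
  have hρH : ρ.IsHermitian := hρ.1
  set σ : Matrix (Fin d) (Fin d) ℂ := ∑ n, P n * ρ * P n with hσdef
  have hσH : σ.IsHermitian := by
    unfold σ
    unfold Matrix.IsHermitian
    rw [Matrix.conjTranspose_sum]
    refine Finset.sum_congr rfl fun n _ => ?_
    rw [Matrix.conjTranspose_mul, Matrix.conjTranspose_mul, hρH.eq, (hPh n).eq, mul_assoc]
  -- notation
  set U : Matrix (Fin d) (Fin d) ℂ := (hρH.eigenvectorUnitary : Matrix (Fin d) (Fin d) ℂ) with hU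
  set V : Matrix (Fin d) (Fin d) ℂ := (hσH.eigenvectorUnitary : Matrix (Fin d) (Fin d) ℂ) with hV
  set p : Fin d → ℝ := hρH.eigenvalues with hp
  set q : Fin d → ℝ := hσH.eigenvalues with hq
  set B : F → Matrix (Fin d) (Fin d) ℂ := fun n => star V * P n * U with hB
  set D : Fin d → Fin d → ℝ := fun j i => ∑ n, Complex.normSq (B n j i) with hD
  have hUU : star U * U = 1 := Unitary.coe_star_mul_self hρH.eigenvectorUnitary
  have hUU' : U * star U = 1 := Unitary.coe_mul_star_self hρH.eigenvectorUnitary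
  have hVV : star V * V = 1 := Unitary.coe_star_mul_self hσH.eigenvectorUnitary
  have hVV' : V * star V = 1 := Unitary.coe_mul_star_self hσH.eigenvectorUnitary
  have hstarB : ∀ n, star (B n) = star U * P n * V := by
    intro n
    unfold B
    simp only [star_eq_conjTranspose, Matrix.conjTranspose_mul, Matrix.conjTranspose_conjTranspose,
      (hPh n).eq, mul_assoc]
  -- key identity: q j = ∑ i, D j i * p i
  have hkey : ∀ j, q j = ∑ i, D j i * p i := by
    intro j
    have h1 : star V * σ * V = Matrix.diagonal (RCLike.ofReal ∘ q) :=
      by have := hσH.conjStarAlgAut_star_eigenvectorUnitary; rw [Unitary.conjStarAlgAut_star_apply] at this; exact this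
    have h2 : (q j : ℂ) = (star V * σ * V) j j := by
      rw [h1]; simp [Matrix.diagonal_apply_eq]
    have h3 : star V * σ * V = ∑ n, B n * Matrix.diagonal (RCLike.ofReal ∘ p) * star (B n) := by
      unfold σ
      rw [Finset.mul_sum, Finset.sum_mul]
      refine Finset.sum_congr rfl fun n _ => ?_
      rw [hstarB n]
      have hρspec : ρ = U * Matrix.diagonal (RCLike.ofReal ∘ p) * star U := by have := hρH.spectral_theorem; rw [Unitary.conjStarAlgAut_apply] at this; exact this
      unfold B
      rw [hρspec]
      noncomm_ring
    have h4 : (q j : ℂ) = ∑ n, ∑ i, ((Complex.normSq (B n j i) * p i : ℝ) : ℂ) := by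
      rw [h2, h3, Matrix.sum_apply]
      refine Finset.sum_congr rfl fun n _ => ?_
      rw [Matrix.mul_apply]
      refine Finset.sum_congr rfl fun i _ => ?_
      rw [Matrix.mul_diagonal]
      simp only [star_eq_conjTranspose, Matrix.conjTranspose_apply, Function.comp_apply,
        Complex.star_def]
      rw [mul_comm (B n j i), mul_assoc, Complex.mul_conj, Complex.ofReal_mul]
      exact mul_comm _ _
    have h5 : (q j : ℂ) = ((∑ i, D j i * p i : ℝ) : ℂ) := by
      rw [h4, Finset.sum_comm]
      push_cast
      refine Finset.sum_congr rfl fun i _ => ?_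
      unfold D
      push_cast
      rw [Finset.sum_mul]
    exact_mod_cast h5
  -- column sums: ∑ j, D j i = 1
  have hcol : ∀ i, ∑ j, D j i = 1 := by
    intro i
    have h1 : ∑ n, star (B n) * B n = 1 := by
      have : ∀ n, star (B n) * B n = star U * (P n)^2 * U := by
        intro n
        rw [hstarB n]
        unfold B
        calc star U * P n * V * (star V * P n * U)
            = star U * P n * (V * star V) * P n * U := by noncomm_ring
          _ = star U * (P n)^2 * U := by rw [hVV']; noncomm_ring
      rw [Finset.sum_congr rfl fun n _ => this n]
      rw [← Finset.sum_mul, ← Finset.mul_sum, hPsum, mul_one, hUU]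
    have h2 : (∑ n, star (B n) * B n) i i = 1 := by rw [h1]; simp
    rw [Matrix.sum_apply] at h2
    have h3 : ∀ n, (star (B n) * B n) i i = ((∑ j, Complex.normSq (B n j i) : ℝ) : ℂ) := by
      intro n
      rw [Matrix.mul_apply, Complex.ofReal_sum]
      refine Finset.sum_congr rfl fun j _ => ?_
      simp only [star_eq_conjTranspose, Matrix.conjTranspose_apply, Complex.star_def]
      rw [mul_comm, Complex.mul_conj]
    rw [Finset.sum_congr rfl fun n _ => h3 n] at h2
    have h5 : (∑ n, ∑ j, Complex.normSq (B n j i) : ℝ) = 1 := by exact_mod_cast h2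
    rw [← h5, Finset.sum_comm]
  -- row sums: ∑ i, D j i = 1
  have hrow : ∀ j, ∑ i, D j i = 1 := by
    intro j
    have h1 : ∑ n, B n * star (B n) = 1 := by
      have : ∀ n, B n * star (B n) = star V * (P n)^2 * V := by
        intro n
        rw [hstarB n]
        unfold B
        calc star V * P n * U * (star U * P n * V)
            = star V * P n * (U * star U) * P n * V := by noncomm_ring
          _ = star V * (P n)^2 * V := by rw [hUU']; noncomm_ring
      rw [Finset.sum_congr rfl fun n _ => this n]
      rw [← Finset.sum_mul, ← Finset.mul_sum, hPsum, mul_one, hVV]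
    have h2 : (∑ n, B n * star (B n)) j j = 1 := by rw [h1]; simp
    rw [Matrix.sum_apply] at h2
    have h3 : ∀ n, (B n * star (B n)) j j = ((∑ i, Complex.normSq (B n j i) : ℝ) : ℂ) := by
      intro n
      rw [Matrix.mul_apply, Complex.ofReal_sum]
      refine Finset.sum_congr rfl fun i _ => ?_
      simp only [star_eq_conjTranspose, Matrix.conjTranspose_apply, Complex.star_def]
      rw [Complex.mul_conj]
    rw [Finset.sum_congr rfl fun n _ => h3 n] at h2
    have h5 : (∑ n, ∑ i, Complex.normSq (B n j i) : ℝ) = 1 := by exact_mod_cast h2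
    rw [← h5, Finset.sum_comm]
  -- nonnegativity
  have hDnn : ∀ j i, 0 ≤ D j i := fun j i =>
    Finset.sum_nonneg fun n _ => Complex.normSq_nonneg _
  have hpnn : ∀ i, 0 ≤ p i := fun i => hρ.eigenvalues_nonneg i
  -- Jensen
  have hjensen : ∀ j, ∑ i, D j i * Real.negMulLog (p i) ≤ Real.negMulLog (q j) := by
    intro j
    rw [hkey j]
    have := Real.concaveOn_negMulLog.le_map_sum (t := Finset.univ) (w := D j) (p := p)
      (fun i _ => hDnn j i) (hrow j) (fun i _ => hpnn i)
    simpa [smul_eq_mul] using this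
  -- conclude
  rw [vnEntropy, vnEntropy, dif_pos hρH, dif_pos hσH]
  calc ∑ i, Real.negMulLog (hρH.eigenvalues i)
      = ∑ i, (∑ j, D j i) * Real.negMulLog (p i) := by
        refine Finset.sum_congr rfl fun i _ => ?_
        rw [hcol i, one_mul]
    _ = ∑ j, ∑ i, D j i * Real.negMulLog (p i) := by
        simp_rw [Finset.sum_mul]
        rw [Finset.sum_comm]
    _ ≤ ∑ j, Real.negMulLog (q j) := Finset.sum_le_sum fun j _ => hjensen j
    _ = ∑ j, Real.negMulLog (hσH.eigenvalues j) := rfl
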